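/- The Rauzy operation b preserves irreducibility: if π is an irreducible permutation of {1,…,m}, then bπ, defined by bπ(j) = π(j) if π(j) ≤ π(m), bπ(j) = π(j)+1 if π(m) < π(j) < m, and bπ(j) = π(m)+1 if π(j) = m, is also an irreducible permutation. -/
import Mathlib


/-- The Rauzy operation `b` preserves irreducibility. Indices are 0-based:
the symbol `m` of the paper corresponds to the index `m - 1`. -/
theorem rauzy_b_preserves_irreducible (m : ℕ) (hm : 0 < m)
    (π : Equiv.Perm (Fin m)) (σ : Fin m → Fin m)
    (q : Fin m) (hq : q = π ⟨m - 1, Nat.sub_lt hm one_pos⟩)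
    (h1 : ∀ j : Fin m, ((π j : ℕ)) ≤ (q : ℕ) → σ j = π j)
    (h2 : ∀ j : Fin m, (q : ℕ) < (π j : ℕ) → (π j : ℕ) < m - 1 →
      ((σ j : ℕ)) = (π j : ℕ) + 1)
    (h3 : ∀ j : Fin m, (π j : ℕ) = m - 1 → ((σ j : ℕ)) = (q : ℕ) + 1)
    (hirr : ∀ k : ℕ, 0 < k → k < m →
      (⇑π) '' {i : Fin m | (i : ℕ) < k} ≠ {i : Fin m | (i : ℕ) < k}) :
    Function.Bijective σ ∧
    ∀ k : ℕ, 0 < k → k < m →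
      σ '' {i : Fin m | (i : ℕ) < k} ≠ {i : Fin m | (i : ℕ) < k} := by
  have hqlt : (q : ℕ) < m - 1 := by
    rcases lt_or_eq_of_le (Nat.le_sub_one_of_lt q.isLt) with h | h
    · exact h
    · exfalso
      set j := π.symm ⟨m - 1, Nat.sub_lt hm one_pos⟩ with hj
      have hπj : (π j : ℕ) = m - 1 := by simp [hj]
      have h3' := h3 j hπj
      have hlt := (σ j).isLt
      omega
  have key : ∀ j : Fin m,
      ((π j : ℕ) ≤ (q : ℕ) ∧ (σ j : ℕ) = (π j : ℕ)) ∨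
      ((q : ℕ) < (π j : ℕ) ∧ (π j : ℕ) < m - 1 ∧ (σ j : ℕ) = (π j : ℕ) + 1) ∨
      ((π j : ℕ) = m - 1 ∧ (σ j : ℕ) = (q : ℕ) + 1) := by
    intro j
    have hlt : (π j : ℕ) ≤ m - 1 := Nat.le_sub_one_of_lt (π j).isLt
    rcases le_or_gt (π j : ℕ) (q : ℕ) with h | h
    · exact Or.inl ⟨h, by rw [h1 j h]⟩
    rcases lt_or_eq_of_le hlt with h' | h'
    · exact Or.inr (Or.inl ⟨h, h', h2 j h h'⟩)
    · exact Or.inr (Or.inr ⟨h', h3 j h'⟩)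
  have hinj : Function.Injective σ := by
    intro a b hab
    have hab' : (σ a : ℕ) = (σ b : ℕ) := by rw [hab]
    apply π.injective
    apply Fin.ext
    rcases key a with ⟨ha1, ha2⟩ | ⟨ha1, ha2, ha3⟩ | ⟨ha1, ha2⟩ <;>
      rcases key b with ⟨hb1, hb2⟩ | ⟨hb1, hb2, hb3⟩ | ⟨hb1, hb2⟩ <;> omega
  refine ⟨Finite.injective_iff_bijective.mp hinj, ?_⟩
  intro k hk0 hkm heq
  rcases le_or_gt k (q : ℕ) with hkq | hkq
  · -- k ≤ q : then σ = π on {i < k}, contradicting hirr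
    apply hirr k hk0 hkm
    conv_rhs => rw [← heq]
    apply Set.image_congr
    intro j hj
    have hσj : σ j ∈ {i : Fin m | (i : ℕ) < k} := heq ▸ Set.mem_image_of_mem σ hj
    have hσj' : (σ j : ℕ) < k := hσj
    rcases key j with ⟨h1', h2'⟩ | ⟨h1', h2', h3'⟩ | ⟨h1', h2'⟩
    · exact Fin.ext h2'.symm
    · omega
    · omega
  · -- q < k : then q ∈ σ '' {i < k}, forcing m-1 < k, contradiction
    have hqmem : q ∈ {i : Fin m | (i : ℕ) < k} := hkq
    rw [← heq] at hqmem
    obtain ⟨j, hj, hσj⟩ := hqmem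
    have hσj' : (σ j : ℕ) = (q : ℕ) := by rw [hσj]
    have hjk : (j : ℕ) < k := hj
    rcases key j with ⟨h1', h2'⟩ | ⟨h1', h2', h3'⟩ | ⟨h1', h2'⟩
    · -- π j = q = π (m-1), so j = m-1, but j < k ≤ m-1
      have hπjq : π j = π ⟨m - 1, Nat.sub_lt hm one_pos⟩ := by
        rw [← hq]; exact Fin.ext (by omega)
      have := π.injective hπjq
      have hjv : (j : ℕ) = m - 1 := by rw [this]
      omega
    · omega
    · omega
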